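/- arXiv:1606.06165 — 7 statements merged into one kernel-verified Lean document; each statement's English description precedes it below -/
import Mathlib

section
/- For nonzero vectors x, y in a complex Hilbert space H and λ ∈ (0,1), the λ-Aluthge transform of the rank-one operator x ⊗ y satisfies Δ_λ(x ⊗ y) = (⟨x,y⟩ / ‖y‖²) (y ⊗ y). -/
open ContinuousLinearMap
open scoped InnerProductSpace

variable {H K : Type*} [NormedAddCommGroup H] [InnerProductSpace ℂ H] [CompleteSpace H]
  [NormedAddCommGroup K] [InnerProductSpace ℂ K] [CompleteSpace K]

/-- `|T| = √(T*T)`, via the continuous functional calculus. -/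
noncomputable def absOp {E : Type*} [NormedAddCommGroup E] [InnerProductSpace ℂ E]
    [CompleteSpace E] (T : E →L[ℂ] E) : E →L[ℂ] E := CFC.sqrt (adjoint T * T)

/-- real power of a (positive) operator via continuous functional calculus. -/
noncomputable def opPow {E : Type*} [NormedAddCommGroup E] [InnerProductSpace ℂ E]
    [CompleteSpace E] (A : E →L[ℂ] E) (r : ℝ) : E →L[ℂ] E := CFC.rpow A r

/-- `V` is the partial isometry of the polar decomposition `T = V|T|`, `N(V) = N(T)`. -/
def IsPolarDecomp {E : Type*} [NormedAddCommGroup E] [InnerProductSpace ℂ E]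
    [CompleteSpace E] (T V : E →L[ℂ] E) : Prop :=
  V * adjoint V * V = V ∧ T = V * absOp T ∧ LinearMap.ker (V : E →ₗ[ℂ] E) = LinearMap.ker (T : E →ₗ[ℂ] E)

/-- The λ-Aluthge transform `Δ_λ(T) = |T|^λ V |T|^{1-λ}` computed from the
partial isometry `V` of the polar decomposition of `T`. -/
noncomputable def aluthge {E : Type*} [NormedAddCommGroup E] [InnerProductSpace ℂ E]
    [CompleteSpace E] (l : ℝ) (T V : E →L[ℂ] E) : E →L[ℂ] E :=
  opPow (absOp T) l * V * opPow (absOp T) (1 - l)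

/-- the rank one operator `x ⊗ y : u ↦ ⟨u,y⟩x` (inner product linear in the first slot). -/
noncomputable def rankOne {E : Type*} [NormedAddCommGroup E] [InnerProductSpace ℂ E]
    (x y : E) : E →L[ℂ] E := (innerSL ℂ y).smulRight x

/-- a unitary operator between two Hilbert spaces. -/
def IsUnitaryOp (U : H →L[ℂ] K) : Prop :=
  adjoint U ∘L U = ContinuousLinearMap.id ℂ H ∧ U ∘L adjoint U = ContinuousLinearMap.id ℂ K

/-- orthogonal projection: self-adjoint idempotent. -/
def IsOrthoProj {E : Type*} [NormedAddCommGroup E] [InnerProductSpace ℂ E]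
    [CompleteSpace E] (P : E →L[ℂ] E) : Prop := IsSelfAdjoint P ∧ P * P = P

/-- quasi-normal: `T` commutes with `T*T`. -/
def IsQuasinormal {E : Type*} [NormedAddCommGroup E] [InnerProductSpace ℂ E]
    [CompleteSpace E] (T : E →L[ℂ] E) : Prop :=
  T * (adjoint T * T) = (adjoint T * T) * T


section Aux

open scoped NNReal

variable {E : Type*} [NormedAddCommGroup E] [InnerProductSpace ℂ E] [CompleteSpace E]

lemma rankOne_apply' (x y u : E) : rankOne x y u = ⟪y, u⟫_ℂ • x := rfl

lemma adjoint_rankOne (x y : E) : adjoint (rankOne x y) = rankOne y x := by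
  ext u
  apply ext_inner_left ℂ
  intro v
  rw [adjoint_inner_right]
  simp [rankOne_apply', inner_smul_left, inner_smul_right, mul_comm]

lemma rankOne_mul (a b c d : E) :
    rankOne a b * rankOne c d = ⟪b, c⟫_ℂ • rankOne a d := by
  ext u
  simp [ContinuousLinearMap.mul_apply, rankOne_apply', inner_smul_right, smul_smul, mul_comm]

lemma coe_smul_op (r : ℝ) (A : E →L[ℂ] E) : (r : ℂ) • A = r • A := by
  rw [← algebraMap_smul ℂ r A, Complex.coe_algebraMap]

lemma smulProj_nonneg (c : ℝ) (P : E →L[ℂ] E) (hc : 0 ≤ c) (hP : IsSelfAdjoint P)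
    (hP2 : P * P = P) : (0 : E →L[ℂ] E) ≤ c • P := by
  have : star (Real.sqrt c • P) * (Real.sqrt c • P) = c • P := by
    rw [star_smul, hP.star_eq, star_trivial, smul_mul_smul_comm, hP2, Real.mul_self_sqrt hc]
  rw [← this]
  exact star_mul_self_nonneg _

lemma spec_subset [Nontrivial E] (a : E →L[ℂ] E) (c : ℝ) (h : a * a = c • a) :
    spectrum ℝ a ⊆ {0, c} := by
  intro t ht
  have h0 : Polynomial.aeval a (Polynomial.X ^ 2 - Polynomial.C c * Polynomial.X) = 0 := by
    simp [sq, h, Polynomial.aeval_X, sub_eq_zero, Algebra.smul_def]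
  have := spectrum.subset_polynomial_aeval a (Polynomial.X ^ 2 - Polynomial.C c * Polynomial.X)
    ⟨t, ht, rfl⟩
  rw [h0, spectrum.zero_eq] at this
  simp only [Polynomial.eval_sub, Polynomial.eval_pow, Polynomial.eval_X, Polynomial.eval_mul,
    Polynomial.eval_C, Set.mem_singleton_iff, sub_eq_zero, sq] at this
  rcases mul_eq_mul_right_iff.mp this with h' | h'
  · exact Or.inr h'
  · exact Or.inl h'

lemma opPow_smulProj [Nontrivial E] (P : E →L[ℂ] E) (hP : IsSelfAdjoint P) (hP2 : P * P = P)
    {c r : ℝ} (hc : 0 < c) (hr : 0 < r) : opPow (c • P) r = (c ^ r) • P := by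
  set a := c • P with ha_def
  have ha : IsSelfAdjoint a := by
    rw [IsSelfAdjoint, ha_def, star_smul, star_trivial, hP.star_eq]
  have ha0 : (0 : E →L[ℂ] E) ≤ a := smulProj_nonneg c P hc.le hP hP2
  have haa : a * a = c • a := by
    rw [ha_def, smul_mul_smul_comm, hP2, ← smul_smul]
  have hspec := spec_subset a c haa
  have key : c ^ (r - 1) * c = c ^ r := by
    have h2 := Real.rpow_add hc (r - 1) 1
    rw [Real.rpow_one] at h2
    rw [← h2]
    norm_num
  rw [opPow, CFC.rpow_eq_pow, CFC.rpow_def, cfc_nnreal_eq_real (A := E →L[ℂ] E) _ a ha0,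
    cfc_congr (g := fun x : ℝ => c ^ (r - 1) * x) ?_, cfc_const_mul_id _ a ha,
    ha_def, smul_smul]
  · rw [key]
  · intro t ht
    rcases hspec ht with h0 | hc'
    · simp only [h0, Set.mem_singleton_iff] at *
      simp [Real.toNNReal_zero, NNReal.zero_rpow hr.ne', h0]
    · simp only [Set.mem_singleton_iff] at hc'
      show ((Real.toNNReal t ^ r : ℝ≥0) : ℝ) = c ^ (r - 1) * t
      rw [hc', NNReal.coe_rpow, Real.coe_toNNReal c hc.le, key]

end Aux

set_option maxHeartbeats 1000000 in
/-- `Δ_λ(x ⊗ y) = (⟨x,y⟩/‖y‖²)(y ⊗ y)` for nonzero `x, y` and `λ ∈ (0,1)`. -/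
theorem stmt4 (x y : H) (hx : x ≠ 0) (hy : y ≠ 0) (l : ℝ) (hl : l ∈ Set.Ioo (0 : ℝ) 1)
    (V : H →L[ℂ] H) (hV : IsPolarDecomp (rankOne x y) V) :
    aluthge l (rankOne x y) V = ((⟪y, x⟫_ℂ) / ((‖y‖ : ℂ) ^ 2)) • rankOne y y := by
  obtain ⟨hl0, hl1⟩ := hl
  obtain ⟨hVVV, hTVA, hker⟩ := hV
  have hNT : Nontrivial H := ⟨⟨x, 0, hx⟩⟩
  set T := rankOne x y with hT
  set Q := rankOne y y with hQ
  have hny' : ‖y‖ ≠ 0 := norm_ne_zero_iff.mpr hy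
  have hny : (0 : ℝ) < ‖y‖ ^ 2 := by positivity
  have hnx : (0 : ℝ) < ‖x‖ := norm_pos_iff.mpr hx
  have hQsa : IsSelfAdjoint Q := by
    rw [IsSelfAdjoint, hQ, ContinuousLinearMap.star_eq_adjoint, adjoint_rankOne]
  have hyy : ⟪y, y⟫_ℂ = ((‖y‖ ^ 2 : ℝ) : ℂ) := by
    rw [inner_self_eq_norm_sq_to_K]
    norm_cast
  have hxx : ⟪x, x⟫_ℂ = ((‖x‖ ^ 2 : ℝ) : ℂ) := by
    rw [inner_self_eq_norm_sq_to_K]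
    norm_cast
  have hQQ : Q * Q = (‖y‖ ^ 2 : ℝ) • Q := by
    rw [hQ, rankOne_mul, hyy, coe_smul_op]
  set P : H →L[ℂ] H := ((‖y‖ ^ 2)⁻¹ : ℝ) • Q with hP
  have hPsa : IsSelfAdjoint P := by
    rw [IsSelfAdjoint, hP, star_smul, star_trivial, hQsa.star_eq]
  have hPP : P * P = P := by
    rw [hP, smul_mul_smul_comm, hQQ, smul_smul]
    congr 1
    field_simp
  set c : ℝ := ‖x‖ * ‖y‖ with hc
  have hcpos : (0 : ℝ) < c := by positivity
  have hTT : adjoint T * T = (c * c) • P := by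
    rw [hT, adjoint_rankOne, rankOne_mul, hP, smul_smul, hxx, coe_smul_op, ← hQ]
    congr 1
    rw [hc]
    field_simp
  have habs : absOp T = c • P := by
    rw [absOp, hTT]
    apply CFC.sqrt_unique
    · rw [smul_mul_smul_comm, hPP, smul_smul]
    · exact smulProj_nonneg c P hcpos.le hPsa hPP
  have hVP : V * P = (c⁻¹ : ℝ) • T := by
    have : T = c • (V * P) := by rw [hTVA, habs, mul_smul_comm]
    rw [this, smul_smul, inv_mul_cancel₀ hcpos.ne', one_smul]
  have h1l : (0 : ℝ) < 1 - l := by linarith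
  have hrpow : c ^ l * c ^ (1 - l) = c := by
    rw [← Real.rpow_add hcpos]
    norm_num
  have hPT : P * T = ((⟪y, x⟫_ℂ) / ((‖y‖ : ℂ) ^ 2)) • Q := by
    rw [hP, hT, smul_mul_assoc, rankOne_mul, ← hQ, ← coe_smul_op, smul_smul, div_eq_mul_inv]
    congr 1
    push_cast
    ring
  calc aluthge l T V = opPow (absOp T) l * V * opPow (absOp T) (1 - l) := rfl
    _ = ((c ^ l) • P) * V * ((c ^ (1 - l)) • P) := by
        rw [habs, opPow_smulProj P hPsa hPP hcpos hl0, opPow_smulProj P hPsa hPP hcpos h1l]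
    _ = (c ^ l * c ^ (1 - l)) • (P * (V * P)) := by
        rw [smul_mul_assoc, smul_mul_assoc, mul_smul_comm, mul_assoc, smul_smul]
    _ = c • ((c⁻¹ : ℝ) • (P * T)) := by rw [hrpow, hVP, mul_smul_comm]
    _ = P * T := by rw [smul_smul, mul_inv_cancel₀ hcpos.ne', one_smul]
    _ = ((⟪y, x⟫_ℂ) / ((‖y‖ : ℂ) ^ 2)) • Q := hPT
end

section
/- Suppose A ∈ B(H) has the property that for every vector z ∈ H, either ⟨Az, z⟩ = 0 or Az and z are linearly dependent. Then A is a scalar multiple of the identity. -/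
open ContinuousLinearMap
open scoped InnerProductSpace

variable {H K : Type*} [NormedAddCommGroup H] [InnerProductSpace ℂ H] [CompleteSpace H]
  [NormedAddCommGroup K] [InnerProductSpace ℂ K] [CompleteSpace K]

lemma stmt8_dich (A : H →L[ℂ] H)
    (h : ∀ z : H, ⟪A z, z⟫_ℂ = 0 ∨ ¬ LinearIndependent ℂ ![A z, z]) (u : H) :
    ⟪A u, u⟫_ℂ = 0 ∨ ∃ c : ℂ, A u = c • u := by
  rcases h u with h0 | hdep
  · exact Or.inl h0
  rw [LinearIndependent.pair_iff] at hdep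
  push_neg at hdep
  obtain ⟨s, t, hst, hne⟩ := hdep
  by_cases hs : s = 0
  · subst hs
    simp only [zero_smul, zero_add, smul_eq_zero] at hst
    rcases hst with h1 | h1
    · exact absurd h1 (hne rfl)
    · left; rw [h1]; exact inner_zero_right _
  · right
    refine ⟨-(s⁻¹ * t), ?_⟩
    have h2 : s • A u = (-t) • u := by linear_combination (norm := module) hst
    calc A u = s⁻¹ • (s • A u) := by rw [smul_smul, inv_mul_cancel₀ hs, one_smul]
    _ = -(s⁻¹ * t) • u := by rw [h2, smul_smul]; ring_nf

/-- core of case II: if `w` is an eigenvector with nonzero eigenvalue `α`, and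
`z` is linearly independent from `w`, then `z` is also an eigenvector for `α`. -/
lemma stmt8_core (A : H →L[ℂ] H)
    (hP : ∀ u : H, ⟪A u, u⟫_ℂ = 0 ∨ ∃ c : ℂ, A u = c • u)
    (w z : H) (α : ℂ) (hw : A w = α • w) (hw0 : w ≠ 0) (hα : α ≠ 0)
    (hind : ∀ s t : ℂ, s • w + t • z = 0 → s = 0 ∧ t = 0) :
    A z = α • z := by
  -- expansion of the quadratic form along w + t z
  have expand : ∀ t : ℂ, ⟪A (w + t • z), w + t • z⟫_ℂ =
      (starRingEnd ℂ) α * ⟪w, w⟫_ℂ + t * ((starRingEnd ℂ) α * ⟪w, z⟫_ℂ)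
      + (starRingEnd ℂ) t * ⟪A z, w⟫_ℂ + ((starRingEnd ℂ) t * t) * ⟪A z, z⟫_ℂ := by
    intro t
    rw [map_add, map_smul, hw]
    simp only [inner_add_left, inner_add_right, inner_smul_left, inner_smul_right]
    ring
  -- two eigen-directions force A z = α • z
  have hA : ∀ t₁ t₂ c₁ c₂ : ℂ, t₁ ≠ 0 → t₂ ≠ 0 → t₁ ≠ t₂ →
      A (w + t₁ • z) = c₁ • (w + t₁ • z) → A (w + t₂ • z) = c₂ • (w + t₂ • z) →
      A z = α • z := by
    intro t₁ t₂ c₁ c₂ ht₁ ht₂ htne E1 E2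
    rw [map_add, map_smul, hw] at E1 E2
    have E1' : t₁ • A z = (c₁ - α) • w + (c₁ * t₁) • z := by
      linear_combination (norm := module) E1
    have E2' : t₂ • A z = (c₂ - α) • w + (c₂ * t₂) • z := by
      linear_combination (norm := module) E2
    have key2 : (t₂ * (c₁ - α) - t₁ * (c₂ - α)) • w + (t₁ * t₂ * (c₁ - c₂)) • z = 0 := by
      linear_combination (norm := module) t₁ • E2' - t₂ • E1'
    obtain ⟨h1, h2⟩ := hind _ _ key2
    have hc : c₁ = c₂ := by
      have hne := mul_ne_zero ht₁ ht₂
      rcases mul_eq_zero.mp h2 with h | h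
      · exact absurd h hne
      · exact sub_eq_zero.mp h
    have hca : c₁ = α := by
      have h4 : (t₂ - t₁) * (c₁ - α) = 0 := by linear_combination h1 - t₁ * hc
      rcases mul_eq_zero.mp h4 with h | h
      · exact absurd h (sub_ne_zero.mpr htne.symm)
      · exact sub_eq_zero.mp h
    have hfin : t₁ • A z = t₁ • (α • z) := by
      rw [E1', hca]
      module
    exact smul_right_injective H ht₁ hfin
  -- a "good pair" of vanishing quadratic forms gives a contradiction
  have hB : ∀ k₁ k₂ : ℝ, (k₁ : ℂ) ^ 2 ≠ (k₂ : ℂ) ^ 2 →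
      ⟪A (w + ((k₁ : ℂ)) • z), w + ((k₁ : ℂ)) • z⟫_ℂ = 0 →
      ⟪A (w + (-(k₁ : ℂ)) • z), w + (-(k₁ : ℂ)) • z⟫_ℂ = 0 →
      ⟪A (w + ((k₂ : ℂ)) • z), w + ((k₂ : ℂ)) • z⟫_ℂ = 0 →
      ⟪A (w + (-(k₂ : ℂ)) • z), w + (-(k₂ : ℂ)) • z⟫_ℂ = 0 → False := by
    intro k₁ k₂ hk h1 h2 h3 h4
    rw [expand] at h1 h2 h3 h4
    simp only [map_neg, Complex.conj_ofReal] at h1 h2 h3 h4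
    have hcz : ⟪A z, z⟫_ℂ = 0 := by
      have hc : ((k₁ : ℂ) ^ 2 - (k₂ : ℂ) ^ 2) * ⟪A z, z⟫_ℂ = 0 := by
        linear_combination (h1 + h2 - h3 - h4) / 2
      rcases mul_eq_zero.mp hc with h | h
      · exact absurd (sub_eq_zero.mp h) hk
      · exact h
    have hX : (starRingEnd ℂ) α * ⟪w, w⟫_ℂ = 0 := by
      linear_combination (h1 + h2) / 2 - (k₁ : ℂ) ^ 2 * hcz
    rcases mul_eq_zero.mp hX with h | h
    · exact hα (by simpa using congrArg (starRingEnd ℂ) h)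
    · exact hw0 (inner_self_eq_zero.mp h)
  -- extract an eigen-direction from a failed good pair
  have ext : ∀ k : ℝ,
      ¬(⟪A (w + ((k : ℂ)) • z), w + ((k : ℂ)) • z⟫_ℂ = 0 ∧
        ⟪A (w + (-(k : ℂ)) • z), w + (-(k : ℂ)) • z⟫_ℂ = 0) →
      ∃ s : ℂ, (s = (k : ℂ) ∨ s = -(k : ℂ)) ∧ ∃ c : ℂ, A (w + s • z) = c • (w + s • z) := by
    intro k hk
    rcases hP (w + (k : ℂ) • z) with h1 | h1
    · rcases hP (w + (-(k : ℂ)) • z) with h2 | h2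
      · exact absurd ⟨h1, h2⟩ hk
      · exact ⟨-(k : ℂ), Or.inr rfl, h2⟩
    · exact ⟨(k : ℂ), Or.inl rfl, h1⟩
  -- from two failed good pairs we are done
  have fromPair : ∀ k₁ k₂ : ℝ, k₁ ≠ 0 → k₂ ≠ 0 → (k₁ : ℂ) ^ 2 ≠ (k₂ : ℂ) ^ 2 →
      ¬(⟪A (w + ((k₁ : ℂ)) • z), w + ((k₁ : ℂ)) • z⟫_ℂ = 0 ∧
        ⟪A (w + (-(k₁ : ℂ)) • z), w + (-(k₁ : ℂ)) • z⟫_ℂ = 0) →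
      ¬(⟪A (w + ((k₂ : ℂ)) • z), w + ((k₂ : ℂ)) • z⟫_ℂ = 0 ∧
        ⟪A (w + (-(k₂ : ℂ)) • z), w + (-(k₂ : ℂ)) • z⟫_ℂ = 0) →
      A z = α • z := by
    intro k₁ k₂ hk₁ hk₂ hkne hb₁ hb₂
    obtain ⟨s₁, hs₁, c₁, hc₁⟩ := ext k₁ hb₁
    obtain ⟨s₂, hs₂, c₂, hc₂⟩ := ext k₂ hb₂
    have hsq₁ : s₁ ^ 2 = (k₁ : ℂ) ^ 2 := by rcases hs₁ with rfl | rfl <;> ring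
    have hsq₂ : s₂ ^ 2 = (k₂ : ℂ) ^ 2 := by rcases hs₂ with rfl | rfl <;> ring
    have hs₁0 : s₁ ≠ 0 := by
      rcases hs₁ with rfl | rfl
      · exact_mod_cast Complex.ofReal_ne_zero.mpr hk₁
      · exact neg_ne_zero.mpr (Complex.ofReal_ne_zero.mpr hk₁)
    have hs₂0 : s₂ ≠ 0 := by
      rcases hs₂ with rfl | rfl
      · exact_mod_cast Complex.ofReal_ne_zero.mpr hk₂
      · exact neg_ne_zero.mpr (Complex.ofReal_ne_zero.mpr hk₂)
    have hss : s₁ ≠ s₂ := by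
      intro e
      exact hkne (by rw [← hsq₁, ← hsq₂, e])
    exact hA s₁ s₂ c₁ c₂ hs₁0 hs₂0 hss hc₁ hc₂
  by_cases g1 : (⟪A (w + ((1 : ℝ) : ℂ) • z), w + ((1 : ℝ) : ℂ) • z⟫_ℂ = 0 ∧
      ⟪A (w + (-((1 : ℝ) : ℂ)) • z), w + (-((1 : ℝ) : ℂ)) • z⟫_ℂ = 0)
  · by_cases g2 : (⟪A (w + ((2 : ℝ) : ℂ) • z), w + ((2 : ℝ) : ℂ) • z⟫_ℂ = 0 ∧
        ⟪A (w + (-((2 : ℝ) : ℂ)) • z), w + (-((2 : ℝ) : ℂ)) • z⟫_ℂ = 0)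
    · exact (hB 1 2 (by norm_num) g1.1 g1.2 g2.1 g2.2).elim
    · by_cases g3 : (⟪A (w + ((3 : ℝ) : ℂ) • z), w + ((3 : ℝ) : ℂ) • z⟫_ℂ = 0 ∧
          ⟪A (w + (-((3 : ℝ) : ℂ)) • z), w + (-((3 : ℝ) : ℂ)) • z⟫_ℂ = 0)
      · exact (hB 1 3 (by norm_num) g1.1 g1.2 g3.1 g3.2).elim
      · exact fromPair 2 3 (by norm_num) (by norm_num) (by norm_num) g2 g3
  · by_cases g2 : (⟪A (w + ((2 : ℝ) : ℂ) • z), w + ((2 : ℝ) : ℂ) • z⟫_ℂ = 0 ∧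
        ⟪A (w + (-((2 : ℝ) : ℂ)) • z), w + (-((2 : ℝ) : ℂ)) • z⟫_ℂ = 0)
    · by_cases g3 : (⟪A (w + ((3 : ℝ) : ℂ) • z), w + ((3 : ℝ) : ℂ) • z⟫_ℂ = 0 ∧
          ⟪A (w + (-((3 : ℝ) : ℂ)) • z), w + (-((3 : ℝ) : ℂ)) • z⟫_ℂ = 0)
      · exact (hB 2 3 (by norm_num) g2.1 g2.2 g3.1 g3.2).elim
      · exact fromPair 1 3 (by norm_num) (by norm_num) (by norm_num) g1 g3
    · exact fromPair 1 2 (by norm_num) (by norm_num) (by norm_num) g1 g2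

/-- if for every `z` either `⟨Az,z⟩ = 0` or `Az, z` are linearly dependent,
then `A` is a scalar multiple of the identity. -/
theorem stmt8 (A : H →L[ℂ] H)
    (h : ∀ z : H, ⟪A z, z⟫_ℂ = 0 ∨ ¬ LinearIndependent ℂ ![A z, z]) :
    ∃ α : ℂ, A = α • (1 : H →L[ℂ] H) := by
  have hP : ∀ u : H, ⟪A u, u⟫_ℂ = 0 ∨ ∃ c : ℂ, A u = c • u := stmt8_dich A h
  by_cases hall : ∀ u : H, ⟪A u, u⟫_ℂ = 0
  · refine ⟨0, ?_⟩
    have hA0 : (A : H →ₗ[ℂ] H) = 0 := (inner_map_self_eq_zero _).mp hall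
    ext x
    have : A x = 0 := congrFun (congrArg DFunLike.coe hA0) x
    simp [this]
  · push_neg at hall
    obtain ⟨w, hfw⟩ := hall
    obtain ⟨α, hw⟩ := (hP w).resolve_left hfw
    have hw0 : w ≠ 0 := by
      intro e; exact hfw (by simp [e])
    have hα : α ≠ 0 := by
      intro e
      apply hfw
      rw [hw, e, zero_smul]
      exact inner_zero_left _
    refine ⟨α, ?_⟩
    ext z
    have key : A z = α • z := by
      by_cases hz : ∃ c : ℂ, z = c • w
      · obtain ⟨c, rfl⟩ := hz
        rw [map_smul, hw, smul_smul, smul_smul, mul_comm]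
      · refine stmt8_core A hP w z α hw hw0 hα ?_
        intro s t hst
        by_cases ht : t = 0
        · subst ht
          simp only [zero_smul, add_zero, smul_eq_zero] at hst
          exact ⟨hst.resolve_right hw0, rfl⟩
        · exfalso
          apply hz
          refine ⟨-(t⁻¹ * s), ?_⟩
          have h2 : t • z = (-s) • w := by linear_combination (norm := module) hst
          calc z = t⁻¹ • (t • z) := by rw [smul_smul, inv_mul_cancel₀ ht, one_smul]
          _ = -(t⁻¹ * s) • w := by rw [h2, smul_smul]; ring_nf
    simp [key]
end

section
/- Let T ∈ B(H) be invertible and λ ∈ [0,1]. Then T is positive if and only if Δ_λ(T) is positive. -/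
open ContinuousLinearMap
open scoped InnerProductSpace

variable {H K : Type*} [NormedAddCommGroup H] [InnerProductSpace ℂ H] [CompleteSpace H]
  [NormedAddCommGroup K] [InnerProductSpace ℂ K] [CompleteSpace K]

section AuxLemmas
open scoped NNReal
variable {E : Type*} [NormedAddCommGroup E] [InnerProductSpace ℂ E] [CompleteSpace E]

lemma opPow_mul_opPow (A : E →L[ℂ] E) (hAu : IsUnit A) (x y : ℝ) :
    opPow A x * opPow A y = opPow A (x + y) :=
  (CFC.rpow_add hAu).symm

lemma opPow_nonneg (A : E →L[ℂ] E) (x : ℝ) : (0 : E →L[ℂ] E) ≤ opPow A x :=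
  CFC.rpow_nonneg

lemma opPow_isUnit (A : E →L[ℂ] E) (hA0 : 0 ≤ A) (hAu : IsUnit A) (x : ℝ) :
    IsUnit (opPow A x) := by
  refine ⟨⟨opPow A x, opPow A (-x), ?_, ?_⟩, rfl⟩
  · rw [opPow_mul_opPow A hAu, add_neg_cancel]; exact CFC.rpow_zero A hA0
  · rw [opPow_mul_opPow A hAu, neg_add_cancel]; exact CFC.rpow_zero A hA0

end AuxLemmas

set_option maxHeartbeats 1000000
set_option synthInstance.maxHeartbeats 400000

/-- for invertible `T` and `λ ∈ [0,1]`, `T` is positive iff `Δ_λ(T)` is. -/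
theorem stmt9 (T : H →L[ℂ] H) (hT : IsUnit T) (l : ℝ) (hl : l ∈ Set.Icc (0 : ℝ) 1)
    (V : H →L[ℂ] H) (hV : IsPolarDecomp T V) :
    T.IsPositive ↔ (aluthge l T V).IsPositive := by
  obtain ⟨hVVV, hTVA, hker⟩ := hV
  have hTT : (0 : H →L[ℂ] H) ≤ adjoint T * T := by
    rw [← ContinuousLinearMap.star_eq_adjoint]
    exact star_mul_self_nonneg T
  have hA0 : (0 : H →L[ℂ] H) ≤ absOp T := CFC.sqrt_nonneg _
  have hAsa : IsSelfAdjoint (absOp T) := .of_nonneg hA0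
  have hadjA : adjoint (absOp T) = absOp T := by
    rw [← ContinuousLinearMap.star_eq_adjoint]; exact hAsa
  have hAA : absOp T * absOp T = adjoint T * T := CFC.sqrt_mul_sqrt_self _ hTT
  have hAu : IsUnit (absOp T) := by
    have hAAu : IsUnit (absOp T * absOp T) := by
      rw [hAA, ← ContinuousLinearMap.star_eq_adjoint]
      exact hT.star.mul hT
    obtain ⟨u, hu⟩ := hAAu
    have hc : Commute (absOp T) ↑u⁻¹ := by
      refine Commute.units_inv_right ?_
      rw [hu]
      exact (Commute.refl _).mul_right (Commute.refl _)
    refine ⟨⟨absOp T, ↑u⁻¹ * absOp T, ?_, ?_⟩, rfl⟩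
    · rw [← mul_assoc, hc.eq, mul_assoc, ← hu, u.inv_mul]
    · rw [mul_assoc, ← hu, u.inv_mul]
  obtain ⟨uA, huA⟩ := id hAu
  have hVA : V * absOp T = T := hTVA.symm
  have hVu : IsUnit V := by
    have h1 : T * ↑uA⁻¹ = V := by
      rw [hTVA, ← huA, mul_assoc, uA.mul_inv, mul_one]
    rw [← h1]
    exact hT.mul uA⁻¹.isUnit
  have hadjT : adjoint T = absOp T * adjoint V := by
    conv_lhs => rw [← hVA]
    rw [← ContinuousLinearMap.star_eq_adjoint, star_mul]
    simp only [ContinuousLinearMap.star_eq_adjoint]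
    rw [hadjA]
  have hadjVV : adjoint V * V = 1 := by
    have e2 : absOp T * adjoint V * (V * absOp T) = absOp T * absOp T := by
      rw [← hadjT, hVA, hAA]
    have e1 : absOp T * ((adjoint V * V) * absOp T) = absOp T * (1 * absOp T) := by
      rw [one_mul]
      calc absOp T * ((adjoint V * V) * absOp T)
          = absOp T * adjoint V * (V * absOp T) := by noncomm_ring
        _ = absOp T * absOp T := e2
    have e3 := hAu.mul_left_cancel e1
    rw [one_mul] at e3
    exact hAu.mul_right_cancel e3
  obtain ⟨uV, huV⟩ := id hVu
  have hVadj : V * adjoint V = 1 := by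
    have h3 : V * ↑uV⁻¹ = 1 := by rw [← huV]; exact uV.mul_inv
    have h2 : adjoint V * (V * ↑uV⁻¹) = ↑uV⁻¹ := by
      rw [← mul_assoc, hadjVV, one_mul]
    rw [h3, mul_one] at h2
    rw [h2]
    exact h3
  constructor
  · -- forward: T positive ⇒ aluthge positive
    intro hpos
    have hT0 : (0 : H →L[ℂ] H) ≤ T := (ContinuousLinearMap.nonneg_iff_isPositive T).mpr hpos
    have hTsa : adjoint T = T := by
      rw [← ContinuousLinearMap.star_eq_adjoint]; exact hpos.isSelfAdjoint
    have hAT : absOp T = T := by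
      rw [absOp, hTsa]; exact CFC.sqrt_mul_self T hT0
    have hV1 : V = 1 := by
      have h : V * T = 1 * T := by
        rw [one_mul]
        conv_lhs => rw [← hAT]
        rw [hVA]
      exact hT.mul_right_cancel h
    have hsum : l + (1 - l) = 1 := by ring
    have h2 : aluthge l T V = T := by
      rw [aluthge, hV1, mul_one, opPow_mul_opPow _ hAu, hsum,
        show opPow (absOp T) 1 = absOp T from CFC.rpow_one _ hA0, hAT]
    rw [h2]
    exact hpos
  · -- backward: aluthge positive ⇒ T positive
    intro hpos
    have hD0 : (0 : H →L[ℂ] H) ≤ opPow (absOp T) l * V * opPow (absOp T) (1 - l) :=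
      (ContinuousLinearMap.nonneg_iff_isPositive _).mpr hpos
    set A := absOp T with hAdef
    set C := opPow A (2 * l - 1) with hCdef
    set S := C * V with hSdef
    have hC0 : (0 : H →L[ℂ] H) ≤ C := opPow_nonneg A _
    have hCsa : star C = C := IsSelfAdjoint.of_nonneg hC0
    have hCu : IsUnit C := opPow_isUnit A hA0 hAu _
    have hS0 : (0 : H →L[ℂ] H) ≤ S := by
      have hc : star (opPow A (l - 1)) = opPow A (l - 1) :=
        IsSelfAdjoint.of_nonneg (opPow_nonneg A _)
      have h1 : (0 : H →L[ℂ] H) ≤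
          star (opPow A (l - 1)) * (opPow A l * V * opPow A (1 - l)) * opPow A (l - 1) :=
        star_left_conjugate_nonneg hD0 _
      rw [hc] at h1
      have h2 : opPow A (l - 1) * (opPow A l * V * opPow A (1 - l)) * opPow A (l - 1) = S := by
        have e1 : opPow A (l - 1) * opPow A l = C := by
          rw [opPow_mul_opPow A hAu, hCdef]
          congr 1
          ring
        have e2 : opPow A (1 - l) * opPow A (l - 1) = 1 := by
          rw [opPow_mul_opPow A hAu, sub_add_sub_cancel, sub_self]
          exact CFC.rpow_zero A hA0
        calc opPow A (l - 1) * (opPow A l * V * opPow A (1 - l)) * opPow A (l - 1)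
            = (opPow A (l - 1) * opPow A l) * V * (opPow A (1 - l) * opPow A (l - 1)) := by
              noncomm_ring
          _ = C * V * 1 := by rw [e1, e2]
          _ = S := by rw [mul_one]
      rwa [h2] at h1
    have hSsa : star S = S := IsSelfAdjoint.of_nonneg hS0
    have hSS : S * S = C * C := by
      have hstarS : star S = adjoint V * C := by
        rw [hSdef, star_mul, hCsa, ContinuousLinearMap.star_eq_adjoint]
      calc S * S = S * star S := by rw [hSsa]
        _ = C * (V * adjoint V) * C := by rw [hstarS, hSdef]; noncomm_ring
        _ = C * C := by rw [hVadj, mul_one]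
    have hSC : S = C := by
      calc S = CFC.sqrt (S * S) := (CFC.sqrt_mul_self S hS0).symm
        _ = CFC.sqrt (C * C) := by rw [hSS]
        _ = C := CFC.sqrt_mul_self C hC0
    have hV1 : V = 1 := by
      have hCV : C * V = C * 1 := by
        rw [mul_one, ← hSdef]
        exact hSC
      exact hCu.mul_left_cancel hCV
    have hTA : T = A := by rw [hTVA, hV1, one_mul]
    rw [hTA]
    exact (ContinuousLinearMap.nonneg_iff_isPositive A).mp hA0
end

section
/- If T ∈ B(H) is invertible, λ ∈ [0,1], and Δ_λ(T) = cI for some nonzero scalar c, then T = cI. -/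
open ContinuousLinearMap
open scoped InnerProductSpace

variable {H K : Type*} [NormedAddCommGroup H] [InnerProductSpace ℂ H] [CompleteSpace H]
  [NormedAddCommGroup K] [InnerProductSpace ℂ K] [CompleteSpace K]

set_option synthInstance.maxHeartbeats 1000000 in
set_option maxHeartbeats 1000000 in
/-- for invertible `T`, `λ ∈ [0,1]` and `c ≠ 0`, `Δ_λ(T) = cI → T = cI`. -/
theorem stmt10 (T : H →L[ℂ] H) (hT : IsUnit T) (l : ℝ) (hl : l ∈ Set.Icc (0 : ℝ) 1)
    (V : H →L[ℂ] H) (hV : IsPolarDecomp T V) (c : ℂ) (hc : c ≠ 0)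
    (h : aluthge l T V = c • (1 : H →L[ℂ] H)) :
    T = c • (1 : H →L[ℂ] H) := by
  set A : H →L[ℂ] H := absOp T with hAdef
  have hA0 : (0 : H →L[ℂ] H) ≤ A := CFC.sqrt_nonneg _
  have hTT0 : (0 : H →L[ℂ] H) ≤ adjoint T * T := by
    rw [← ContinuousLinearMap.star_eq_adjoint]
    exact star_mul_self_nonneg T
  have hAA : A * A = adjoint T * T := CFC.sqrt_mul_sqrt_self _ hTT0
  have hTTunit : IsUnit (adjoint T * T) := by
    rw [← ContinuousLinearMap.star_eq_adjoint]
    exact hT.star.mul hT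
  -- A is invertible
  have hAunit : IsUnit A := by
    obtain ⟨u, hu⟩ := hTTunit
    have hcomm : Commute A ↑u := by
      rw [hu, ← hAA]; exact (Commute.refl A).mul_right (Commute.refl A)
    have hcomm' : Commute A ↑u⁻¹ := hcomm.units_inv_right
    have h1 : A * (A * ↑u⁻¹) = 1 := by
      rw [← mul_assoc, hAA, ← hu, u.mul_inv]
    have h2 : (A * ↑u⁻¹) * A = 1 := by
      rw [hcomm'.eq, mul_assoc, hAA, ← hu, u.inv_mul]
    exact ⟨⟨A, A * ↑u⁻¹, h1, h2⟩, rfl⟩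
  have hsp : (0 : NNReal) ∉ spectrum NNReal A := spectrum.zero_notMem NNReal hAunit
  -- units for A^l
  have hl1 : CFC.rpow A l * CFC.rpow A (-l) = 1 := CFC.rpow_mul_rpow_neg l ⟨hA0, hAunit⟩
  have hl2 : CFC.rpow A (-l) * CFC.rpow A l = 1 := CFC.rpow_neg_mul_rpow l ⟨hA0, hAunit⟩
  -- multiply the Aluthge identity on the right by A^l
  have key : CFC.rpow A l * T = CFC.rpow A l * (c • (1 : H →L[ℂ] H)) := by
    have h' : CFC.rpow A l * V * CFC.rpow A (1 - l) = c • (1 : H →L[ℂ] H) := h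
    have hmul : CFC.rpow A (1 - l) * CFC.rpow A l = A := by
      simp only [CFC.rpow_eq_pow]
      rw [← CFC.rpow_add hAunit, sub_add_cancel]
      exact CFC.rpow_one A hA0
    calc CFC.rpow A l * T = CFC.rpow A l * (V * A) := by rw [hAdef, ← hV.2.1]
      _ = CFC.rpow A l * V * CFC.rpow A (1 - l) * CFC.rpow A l := by
          rw [mul_assoc (CFC.rpow A l * V), hmul, mul_assoc]
      _ = (c • (1 : H →L[ℂ] H)) * CFC.rpow A l := by rw [h']
      _ = CFC.rpow A l * (c • (1 : H →L[ℂ] H)) := by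
          simp [smul_mul_assoc, mul_smul_comm]
  calc T = 1 * T := (one_mul T).symm
    _ = CFC.rpow A (-l) * (CFC.rpow A l * T) := by rw [← mul_assoc, hl2]
    _ = CFC.rpow A (-l) * (CFC.rpow A l * (c • (1 : H →L[ℂ] H))) := by rw [key]
    _ = c • (1 : H →L[ℂ] H) := by rw [← mul_assoc, hl2, one_mul]
end

section
/- A bounded operator T on a complex Hilbert space is quasi-normal (i.e., TT*T = T*T²) if and only if Δ_λ(T) = T, for any fixed λ ∈ (0,1). -/
open ContinuousLinearMap
open scoped InnerProductSpace

variable {H K : Type*} [NormedAddCommGroup H] [InnerProductSpace ℂ H] [CompleteSpace H]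
  [NormedAddCommGroup K] [InnerProductSpace ℂ K] [CompleteSpace K]

open scoped NNReal

set_option maxHeartbeats 1000000
set_option synthInstance.maxHeartbeats 400000

section CommuteCFC

variable {A : Type*} [CStarAlgebra A]

lemma isClosed_commute_set (b : A) : IsClosed {x : A | Commute b x} := by
  have h : {x : A | Commute b x} = (fun x => b * x - x * b) ⁻¹' {0} := by
    ext x
    simp [Commute, SemiconjBy, sub_eq_zero]
  rw [h]
  exact isClosed_singleton.preimage <|
    (continuous_const.mul continuous_id).sub (continuous_id.mul continuous_const)

lemma commute_of_mem_elemental {a b x : A} (h1 : Commute b a) (h2 : Commute b (star a))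
    (hx : x ∈ StarAlgebra.elemental ℂ a) : Commute b x := by
  induction hx using StarAlgebra.elemental.induction_on with
  | self => exact h1
  | star_self => exact h2
  | algebraMap r => exact Algebra.commute_algebraMap_right r b
  | add u hu v hv pu pv => exact pu.add_right pv
  | mul u hu v hv pu pv => exact pu.mul_right pv
  | closure s hs hmem v hv =>
    exact ((isClosed_commute_set b).closure_subset_iff.mpr (fun u hu => hmem u hu)) hv

lemma commute_cfc_complex {a b : A} (h1 : Commute b a) (h2 : Commute b (star a))
    (f : ℂ → ℂ) : Commute b (cfc f a) := by
  refine cfc_cases (fun x => Commute b x) a f (Commute.zero_right b) fun hf ha => ?_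
  have : IsStarNormal a := ha
  refine commute_of_mem_elemental h1 h2 ?_
  rw [cfcHom_eq_of_isStarNormal a]
  exact Subtype.coe_prop _

lemma commute_cfc_real {a b : A} (ha : IsSelfAdjoint a) (h1 : Commute b a)
    (f : ℝ → ℝ) : Commute b (cfc f a) := by
  rw [cfc_real_eq_complex f ha]
  exact commute_cfc_complex h1 (by rw [ha.star_eq]; exact h1) _

end CommuteCFC

lemma commute_cfc_nnreal {A : Type*} [CStarAlgebra A] [PartialOrder A] [StarOrderedRing A]
    {a b : A} (ha : (0 : A) ≤ a) (h1 : Commute b a)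
    (f : ℝ≥0 → ℝ≥0) : Commute b (cfc f a) := by
  rw [cfc_nnreal_eq_real f a ha]
  exact commute_cfc_real (.of_nonneg ha) h1 _

section OpPow

variable {E : Type*} [NormedAddCommGroup E] [InnerProductSpace ℂ E] [CompleteSpace E]

lemma opPow_eq_nnrpow (A : E →L[ℂ] E) {s : ℝ} (hs : 0 < s) :
    opPow A s = A ^ s.toNNReal := by
  have h : (0 : ℝ≥0) < s.toNNReal := Real.toNNReal_pos.mpr hs
  show A ^ s = A ^ s.toNNReal
  rw [CFC.nnrpow_eq_rpow h, Real.coe_toNNReal s hs.le]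

lemma opPow_add (A : E →L[ℂ] E) {s t : ℝ} (hs : 0 < s) (ht : 0 < t) :
    opPow A (s + t) = opPow A s * opPow A t := by
  rw [opPow_eq_nnrpow A (by positivity), opPow_eq_nnrpow A hs, opPow_eq_nnrpow A ht,
    Real.toNNReal_add hs.le ht.le, CFC.nnrpow_add (Real.toNNReal_pos.mpr hs)
      (Real.toNNReal_pos.mpr ht)]

lemma opPow_apply_eq_zero {A : E →L[ℂ] E} (hA : (0 : E →L[ℂ] E) ≤ A) {y : E} (hy : A y = 0) :
    ∀ s : ℝ, 0 < s → opPow A s y = 0 := by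
  have key : ∀ n : ℕ, ∀ s : ℝ, 0 < s → 1 ≤ 2 ^ n * s → opPow A s y = 0 := by
    intro n
    induction n with
    | zero =>
      intro s hs h1
      simp only [pow_zero, one_mul] at h1
      rcases eq_or_lt_of_le h1 with heq | hlt
      · rw [← heq]
        have h2 : opPow A 1 = A := CFC.rpow_one A hA
        rw [h2]; exact hy
      · have h2 : opPow A s = opPow A (s - 1) * opPow A 1 := by
          rw [← opPow_add A (by linarith) one_pos]
          norm_num
        have h3 : opPow A 1 = A := CFC.rpow_one A hA
        rw [h2, h3, ContinuousLinearMap.mul_apply, hy, map_zero]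
    | succ n ih =>
      intro s hs h1
      have h2s : opPow A (2 * s) y = 0 := by
        refine ih (2 * s) (by positivity) ?_
        calc (1:ℝ) ≤ 2 ^ (n+1) * s := h1
        _ = 2 ^ n * (2 * s) := by ring
      set B := opPow A s with hB
      have hBB : B * B = opPow A (2 * s) := by
        rw [← opPow_add A hs hs]; ring_nf
      have hB0 : (0 : E →L[ℂ] E) ≤ B := CFC.rpow_nonneg
      have hBsa : adjoint B = B := by
        have := IsSelfAdjoint.of_nonneg hB0
        exact ContinuousLinearMap.isSelfAdjoint_iff'.mp this
      have hz : B (B y) = 0 := by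
        have : (B * B) y = 0 := by rw [hBB]; exact h2s
        rwa [ContinuousLinearMap.mul_apply] at this
      have hinner : ⟪B y, B y⟫_ℂ = 0 := by
        rw [← ContinuousLinearMap.adjoint_inner_left B y (B y), hBsa, hz, inner_zero_left]
      exact inner_self_eq_zero.mp hinner
  intro s hs
  obtain ⟨n, hn⟩ : ∃ n : ℕ, 1 / s < 2 ^ n := pow_unbounded_of_one_lt (1/s) one_lt_two
  refine key n s hs ?_
  rw [div_lt_iff₀ hs] at hn
  nlinarith [hn]

end OpPow

/-- `T` is quasi-normal iff `Δ_λ(T) = T`, for any fixed `λ ∈ (0,1)`. -/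
theorem stmt12 (T V : H →L[ℂ] H) (hV : IsPolarDecomp T V)
    (l : ℝ) (hl : l ∈ Set.Ioo (0 : ℝ) 1) :
    IsQuasinormal T ↔ aluthge l T V = T := by
  obtain ⟨hVVV, hTVA, hkerV⟩ := hV
  set A := absOp T with hAdef
  have hl0 : 0 < l := hl.1
  have hl1 : 0 < 1 - l := by linarith [hl.2]
  have hTT0 : (0 : H →L[ℂ] H) ≤ adjoint T * T := by
    have := star_mul_self_nonneg T
    rwa [ContinuousLinearMap.star_eq_adjoint] at this
  have hA0 : (0 : H →L[ℂ] H) ≤ A := CFC.sqrt_nonneg _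
  have hAA : A * A = adjoint T * T := CFC.sqrt_mul_sqrt_self _ hTT0
  set P := opPow A l with hPdef
  set Q := opPow A (1 - l) with hQdef
  have hP0 : (0 : H →L[ℂ] H) ≤ P := CFC.rpow_nonneg
  have hQ0 : (0 : H →L[ℂ] H) ≤ Q := CFC.rpow_nonneg
  have hPQ : P * Q = A := by
    rw [hPdef, hQdef, ← opPow_add A hl0 hl1]
    have h : l + (1 - l) = 1 := by ring
    rw [h]
    exact CFC.rpow_one A hA0
  have hQP : Q * P = A := by
    rw [hPdef, hQdef, ← opPow_add A hl1 hl0]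
    have h : 1 - l + l = 1 := by ring
    rw [h]
    exact CFC.rpow_one A hA0
  constructor
  · intro hq
    have hTA2 : Commute T (adjoint T * T) := hq
    have hTA : Commute T A := by
      have h := commute_cfc_nnreal hTT0 hTA2 NNReal.sqrt
      rwa [← CFC.sqrt_eq_cfc] at h
    have hTP : Commute T P := commute_cfc_nnreal hA0 hTA (fun x : ℝ≥0 => x ^ (l : ℝ))
    have hAP : Commute A P := commute_cfc_nnreal hA0 (Commute.refl A) (fun x : ℝ≥0 => x ^ (l : ℝ))
    have hPVA : (P * V - V * P) * A = 0 := by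
      have h : P * V * A = V * P * A := by
        calc P * V * A = P * T := by rw [mul_assoc, ← hTVA]
        _ = T * P := hTP.eq.symm
        _ = V * A * P := by rw [hTVA]
        _ = V * P * A := by rw [mul_assoc, hAP.eq, ← mul_assoc]
      rw [sub_mul, h, sub_self]
    have hBQ : (P * V - V * P) * Q = 0 := by
      set B := P * V - V * P with hBdef
      have hranker : LinearMap.range (A : H →ₗ[ℂ] H) ≤ LinearMap.ker (B : H →ₗ[ℂ] H) := by
        rintro _ ⟨x, rfl⟩
        have h := congrArg (fun S : H →L[ℂ] H => S x) hPVA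
        simpa [ContinuousLinearMap.mul_apply] using h
      have hclosure : (LinearMap.range (A : H →ₗ[ℂ] H)).topologicalClosure ≤ LinearMap.ker (B : H →ₗ[ℂ] H) :=
        Submodule.topologicalClosure_minimal _ hranker (ContinuousLinearMap.isClosed_ker B)
      have hAsa : adjoint A = A :=
        ContinuousLinearMap.isSelfAdjoint_iff'.mp (.of_nonneg hA0)
      have horth : (LinearMap.ker (A : H →ₗ[ℂ] H))ᗮ ≤ LinearMap.ker (B : H →ₗ[ℂ] H) := by
        have hsub : (LinearMap.range (A : H →ₗ[ℂ] H) : Submodule ℂ H)ᗮ ≤ LinearMap.ker (A : H →ₗ[ℂ] H) := by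
          intro y hy
          have h0 : ⟪A (A y), y⟫_ℂ = 0 :=
            (Submodule.mem_orthogonal _ _).mp hy _ ⟨A y, rfl⟩
          have hin : ⟪A y, A y⟫_ℂ = 0 := by
            rw [← ContinuousLinearMap.adjoint_inner_left A y (A y), hAsa]
            exact h0
          exact LinearMap.mem_ker.mpr (inner_self_eq_zero.mp hin)
        calc (LinearMap.ker (A : H →ₗ[ℂ] H))ᗮ ≤ ((LinearMap.range (A : H →ₗ[ℂ] H) : Submodule ℂ H)ᗮ)ᗮ :=
              Submodule.orthogonal_le hsub
        _ = (LinearMap.range (A : H →ₗ[ℂ] H)).topologicalClosure :=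
              Submodule.orthogonal_orthogonal_eq_closure (LinearMap.range (A : H →ₗ[ℂ] H))
        _ ≤ LinearMap.ker (B : H →ₗ[ℂ] H) := hclosure
      ext x
      have hQx : Q x ∈ (LinearMap.ker (A : H →ₗ[ℂ] H))ᗮ := by
        rw [Submodule.mem_orthogonal]
        intro y hy
        have hQy : Q y = 0 := opPow_apply_eq_zero hA0 (LinearMap.mem_ker.mp hy) _ hl1
        have hQsa : adjoint Q = Q :=
          ContinuousLinearMap.isSelfAdjoint_iff'.mp (.of_nonneg hQ0)
        calc ⟪y, Q x⟫_ℂ = ⟪adjoint Q y, x⟫_ℂ :=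
              (ContinuousLinearMap.adjoint_inner_left Q x y).symm
        _ = 0 := by rw [hQsa, hQy, inner_zero_left]
      have := horth hQx
      simpa [ContinuousLinearMap.mul_apply] using LinearMap.mem_ker.mp this
    have hPVVP : P * V * Q = V * P * Q := by
      rw [sub_mul] at hBQ
      exact sub_eq_zero.mp hBQ
    calc aluthge l T V = P * V * Q := rfl
    _ = V * P * Q := hPVVP
    _ = V * A := by rw [mul_assoc, hPQ]
    _ = T := hTVA.symm
  · intro h
    have halu : aluthge l T V = P * V * Q := rfl
    have h' : P * V * Q = T := by rw [← halu, h]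
    have hTP : Commute T P := by
      have h2 : P * V * (Q * P) = T * P := by rw [← mul_assoc, h']
      rw [hQP, mul_assoc, ← hTVA] at h2
      exact h2.symm
    have key : opPow P (2 / l) = adjoint T * T := by
      have hPl : opPow P (2 / l) = opPow A 2 := by
        show CFC.rpow (CFC.rpow A l) (2 / l) = CFC.rpow A 2
        have h3 := CFC.rpow_rpow_of_exponent_nonneg A l (2 / l) hl0.le (by positivity) hA0
        have h4 : l * (2 / l) = 2 := by field_simp
        rw [h4] at h3
        exact h3
      rw [hPl, ← hAA]
      have h6 : A ^ (((2 : ℕ)) : ℝ) = A ^ (2 : ℕ) := CFC.rpow_natCast A 2 hA0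
      have h5 : opPow A 2 = A * A := by
        show A ^ (2 : ℝ) = A * A
        rw [show (2 : ℝ) = (((2 : ℕ)) : ℝ) by norm_num, h6, pow_two]
      exact h5
    have hcomm : Commute T (adjoint T * T) := by
      rw [← key]
      exact commute_cfc_nnreal hP0 hTP (fun x : ℝ≥0 => x ^ ((2 : ℝ) / l))
    exact hcomm
end

section
/- If x, x' are nonzero independent unit vectors in a complex Hilbert space and λ ∈ (0,1), then Δ_λ((x⊗x')*) ≠ (Δ_λ(x⊗x'))* whenever ⟨x,x'⟩ ≠ 0 and x⊗x ≠ x'⊗x'. More precisely, Δ_λ(x⊗x') = ⟨x,x'⟩(x'⊗x') while Δ_λ(x'⊗x) = ⟨x',x⟩(x⊗x). -/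
open ContinuousLinearMap
open scoped InnerProductSpace

variable {H K : Type*} [NormedAddCommGroup H] [InnerProductSpace ℂ H] [CompleteSpace H]
  [NormedAddCommGroup K] [InnerProductSpace ℂ K] [CompleteSpace K]

section Aux

open scoped NNReal

variable {E : Type*} [NormedAddCommGroup E] [InnerProductSpace ℂ E] [CompleteSpace E]

lemma rankOne_mul_s15 (x y z w : E) :
    rankOne x y * rankOne z w = ⟪y, z⟫_ℂ • rankOne x w := by
  ext u
  simp only [ContinuousLinearMap.mul_apply, rankOne_apply', inner_smul_right,
    ContinuousLinearMap.smul_apply, smul_smul]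
  ring_nf

lemma spectrum_idem_subset (P : E →L[ℂ] E) (hP : P * P = P) :
    spectrum ℝ≥0 P ⊆ {0, 1} := by
  intro t ht
  by_contra h
  simp only [Set.mem_insert_iff, Set.mem_singleton_iff, not_or] at h
  obtain ⟨h0, h1⟩ := h
  have hu : (t : ℝ) ≠ 0 := by exact_mod_cast h0
  have hu1 : (t : ℝ) - 1 ≠ 0 := by
    intro hc
    exact h1 (by exact_mod_cast sub_eq_zero.mp hc)
  have hu1' : (-1 : ℝ) + (t : ℝ) ≠ 0 := fun hc => hu1 (by linarith)
  set u : ℝ := (t : ℝ) with hudef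
  set d : ℝ := (u - 1)⁻¹ - u⁻¹ with hddef
  set Q : E →L[ℂ] E := u⁻¹ • 1 + d • P with hQdef
  have hmap : algebraMap ℝ≥0 (E →L[ℂ] E) t = u • (1 : E →L[ℂ] E) := by
    rw [Algebra.algebraMap_eq_smul_one, NNReal.smul_def]
  have hcoeff : u * d - u⁻¹ - d = 0 := by
    rw [hddef]
    field_simp
    ring
  clear_value u d
  have key : ∀ R S : E →L[ℂ] E, R = u • 1 - P → S = u⁻¹ • 1 + d • P → R * S = 1 := by
    intro R S hR hS
    rw [hR, hS]
    simp only [sub_mul, mul_add, add_mul, mul_sub, smul_mul_assoc, mul_smul_comm,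
      one_mul, mul_one, hP]
    match_scalars
    · field_simp
    · rw [hddef]
      field_simp
      ring
  have key' : ∀ R S : E →L[ℂ] E, R = u • 1 - P → S = u⁻¹ • 1 + d • P → S * R = 1 := by
    intro R S hR hS
    rw [hR, hS]
    simp only [sub_mul, mul_add, add_mul, mul_sub, smul_mul_assoc, mul_smul_comm,
      one_mul, mul_one, hP]
    match_scalars
    · field_simp
    · rw [hddef]
      field_simp
      ring
  have key1 : (algebraMap ℝ≥0 (E →L[ℂ] E) t - P) * Q = 1 :=
    key _ _ (by rw [hmap]) hQdef
  have key2 : Q * (algebraMap ℝ≥0 (E →L[ℂ] E) t - P) = 1 :=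
    key' _ _ (by rw [hmap]) hQdef
  exact (spectrum.mem_iff.mp ht) ⟨⟨_, Q, key1, key2⟩, rfl⟩

lemma opPow_idem (P : E →L[ℂ] E) (hP : P * P = P) (hpos : (0 : E →L[ℂ] E) ≤ P)
    (r : ℝ) (hr : r ≠ 0) : opPow P r = P := by
  have h1 : opPow P r = cfc (fun x : ℝ≥0 => x ^ r) P := rfl
  rw [h1]
  have h2 : cfc (fun x : ℝ≥0 => x ^ r) P = cfc (id : ℝ≥0 → ℝ≥0) P := by
    apply cfc_congr
    intro t ht
    have h := spectrum_idem_subset P hP ht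
    simp only [Set.mem_insert_iff, Set.mem_singleton_iff] at h
    rcases h with h | h <;> simp [h, NNReal.zero_rpow hr, NNReal.one_rpow]
  rw [h2, cfc_id ℝ≥0 P]

end Aux

/-- for independent unit vectors `x, x'` with `⟨x,x'⟩ ≠ 0` and
`x⊗x ≠ x'⊗x'`, one has `Δ_λ(x⊗x') = ⟨x,x'⟩(x'⊗x')`, `Δ_λ(x'⊗x) = ⟨x',x⟩(x⊗x)`,
and `Δ_λ((x⊗x')*) ≠ (Δ_λ(x⊗x'))*`. -/
theorem stmt15 (x x' : H) (hx : ‖x‖ = 1) (hx' : ‖x'‖ = 1)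
    (hind : LinearIndependent ℂ ![x, x'])
    (hinner : ⟪x', x⟫_ℂ ≠ 0) (hne : rankOne x x ≠ rankOne x' x')
    (l : ℝ) (hl : l ∈ Set.Ioo (0 : ℝ) 1)
    (V : H →L[ℂ] H) (hV : IsPolarDecomp (rankOne x x') V)
    (W : H →L[ℂ] H) (hW : IsPolarDecomp (rankOne x' x) W) :
    aluthge l (rankOne x x') V = (⟪x', x⟫_ℂ) • rankOne x' x' ∧
    aluthge l (rankOne x' x) W = (⟪x, x'⟫_ℂ) • rankOne x x ∧
    aluthge l (rankOne x' x) W ≠ adjoint (aluthge l (rankOne x x') V) := by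
  obtain ⟨hl0, hl1⟩ := hl
  have hl0' : l ≠ 0 := ne_of_gt hl0
  have hl1' : (1 : ℝ) - l ≠ 0 := sub_ne_zero.mpr (ne_of_lt hl1).symm
  have hxx : ⟪x, x⟫_ℂ = 1 := by
    rw [inner_self_eq_norm_sq_to_K, hx]; norm_num
  have hxx' : ⟪x', x'⟫_ℂ = 1 := by
    rw [inner_self_eq_norm_sq_to_K, hx']; norm_num
  have hPP : rankOne x' x' * rankOne x' x' = rankOne x' x' := by
    rw [rankOne_mul_s15, hxx', one_smul]
  have hQQ : rankOne x x * rankOne x x = rankOne x x := by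
    rw [rankOne_mul_s15, hxx, one_smul]
  have hPsa : adjoint (rankOne x' x') = rankOne x' x' := adjoint_rankOne x' x'
  have hQsa : adjoint (rankOne x x) = rankOne x x := adjoint_rankOne x x
  have hPpos : (0 : H →L[ℂ] H) ≤ rankOne x' x' := by
    have := star_mul_self_nonneg (rankOne x' x')
    rwa [star_eq_adjoint, hPsa, hPP] at this
  have hQpos : (0 : H →L[ℂ] H) ≤ rankOne x x := by
    have := star_mul_self_nonneg (rankOne x x)
    rwa [star_eq_adjoint, hQsa, hQQ] at this
  have habsT : absOp (rankOne x x') = rankOne x' x' := by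
    unfold absOp
    rw [adjoint_rankOne, rankOne_mul_s15, hxx, one_smul]
    exact CFC.sqrt_unique hPP hPpos
  have habsS : absOp (rankOne x' x) = rankOne x x := by
    unfold absOp
    rw [adjoint_rankOne, rankOne_mul_s15, hxx', one_smul]
    exact CFC.sqrt_unique hQQ hQpos
  have hVP : V * rankOne x' x' = rankOne x x' := by
    conv_rhs => rw [hV.2.1, habsT]
  have hWQ : W * rankOne x x = rankOne x' x := by
    conv_rhs => rw [hW.2.1, habsS]
  have hAl1 : aluthge l (rankOne x x') V = (⟪x', x⟫_ℂ) • rankOne x' x' := by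
    unfold aluthge
    rw [habsT, opPow_idem _ hPP hPpos l hl0', opPow_idem _ hPP hPpos _ hl1',
      mul_assoc, hVP, rankOne_mul_s15]
  have hAl2 : aluthge l (rankOne x' x) W = (⟪x, x'⟫_ℂ) • rankOne x x := by
    unfold aluthge
    rw [habsS, opPow_idem _ hQQ hQpos l hl0', opPow_idem _ hQQ hQpos _ hl1',
      mul_assoc, hWQ, rankOne_mul_s15]
  refine ⟨hAl1, hAl2, ?_⟩
  intro heq
  have hc : ⟪x, x'⟫_ℂ ≠ 0 := fun h => hinner (by rw [← inner_conj_symm, h, map_zero])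
  rw [hAl1, hAl2, ← star_eq_adjoint, star_smul, star_eq_adjoint, hPsa,
    RCLike.star_def, inner_conj_symm] at heq
  exact hne (smul_right_injective _ hc heq)
end

section
/- If M, N are orthogonal projections on a Hilbert space with (MN)² = 0, then MN = 0. -/
open ContinuousLinearMap
open scoped InnerProductSpace

variable {H K : Type*} [NormedAddCommGroup H] [InnerProductSpace ℂ H] [CompleteSpace H]
  [NormedAddCommGroup K] [InnerProductSpace ℂ K] [CompleteSpace K]

/-- if `M, N` are orthogonal projections with `(MN)² = 0`, then `MN = 0`. -/
theorem stmt16 (M N : K →L[ℂ] K) (hM : IsOrthoProj M) (hN : IsOrthoProj N)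
    (h : (M * N) * (M * N) = 0) : M * N = 0 := by
  obtain ⟨hMsa, hMi⟩ := hM
  obtain ⟨hNsa, hNi⟩ := hN
  -- A = N*M*N is self-adjoint with A² = 0, hence A = 0
  have hA2 : (N*M*N)*(N*M*N) = 0 := by
    have h1 : (N*M*N)*(N*M*N) = N*M*((N*N)*M)*N := by noncomm_ring
    rw [hNi] at h1
    rw [h1, show N*M*(N*M)*N = N*((M*N)*(M*N)) by noncomm_ring, h, mul_zero]
  have hstar : star (N*M*N) = N*M*N := by
    simp [star_mul, hMsa.star_eq, hNsa.star_eq, mul_assoc]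
  have hA0 : N*M*N = 0 := by
    have hn : ‖N*M*N‖ * ‖N*M*N‖ = 0 := by
      rw [← CStarRing.norm_star_mul_self, hstar, hA2, norm_zero]
    have := mul_self_eq_zero.mp hn
    exact norm_eq_zero.mp this
  have hsMN : star (M*N) = N*M := by
    rw [star_mul, hMsa.star_eq, hNsa.star_eq]
  have hn : ‖M*N‖ * ‖M*N‖ = 0 := by
    rw [← CStarRing.norm_star_mul_self, hsMN,
      show (N*M)*(M*N) = N*(M*M)*N by noncomm_ring, hMi, hA0, norm_zero]
  exact norm_eq_zero.mp (mul_self_eq_zero.mp hn)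
end
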